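/- arXiv:1609.01451 — 2 statements merged into one kernel-verified Lean document; each statement's English description precedes it below -/
import Mathlib

section
/- Let a : (0,∞) → (0,∞) be measurable with a non-decreasing, x ↦ x/a(x) non-decreasing, and ∫₁^∞ 1/(s·a(s)) ds < ∞. Let (λᵢ)_{i≥1} be a sequence of reals with 0 < λ₁ ≤ λ₂ ≤ ⋯. Then ∫₀¹ sup_{i≥1} (λᵢ e^{-λᵢ s} / a(λᵢ)) ds < ∞. -/
open Set Real MeasureTheory

theorem stmt_2 (a : ℝ → ℝ) (lam : ℕ → ℝ)
    (hmeas : Measurable a)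
    (hpos : ∀ x > 0, 0 < a x)
    (hmono : MonotoneOn a (Ioi 0))
    (hmono' : MonotoneOn (fun x => x / a x) (Ioi 0))
    (hint : ∫⁻ s in Ici (1:ℝ), ENNReal.ofReal (1 / (s * a s)) < ⊤)
    (hlam0 : 0 < lam 0) (hlammono : Monotone lam) :
    ∫⁻ s in Ioc (0:ℝ) 1,
      ⨆ i, ENNReal.ofReal (lam i * Real.exp (-(lam i * s)) / a (lam i)) < ⊤ := by
  -- pointwise bound: for s ∈ (0,1], every term is ≤ 1/(s · a(1/s))
  have key : ∀ s ∈ Ioc (0:ℝ) 1, ∀ i,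
      lam i * Real.exp (-(lam i * s)) / a (lam i) ≤ (s * a s⁻¹)⁻¹ := by
    intro s hs i
    obtain ⟨hs0, hs1⟩ := hs
    have hli : 0 < lam i := lt_of_lt_of_le hlam0 (hlammono (Nat.zero_le i))
    have hc : (0:ℝ) < s⁻¹ := by positivity
    have hac : 0 < a s⁻¹ := hpos _ hc
    have hal : 0 < a (lam i) := hpos _ hli
    have hrw : (s * a s⁻¹)⁻¹ = s⁻¹ / a s⁻¹ := by
      rw [mul_inv, div_eq_mul_inv]
    rcases le_or_gt (lam i) s⁻¹ with hcase | hcase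
    · have hexp : Real.exp (-(lam i * s)) ≤ 1 := by
        apply Real.exp_le_one_iff.2; nlinarith
      have h1 : lam i * Real.exp (-(lam i * s)) / a (lam i) ≤ lam i / a (lam i) := by
        have h2 : lam i * Real.exp (-(lam i * s)) ≤ lam i := by nlinarith
        exact div_le_div_of_nonneg_right h2 hal.le
      have h2 : lam i / a (lam i) ≤ s⁻¹ / a s⁻¹ :=
        hmono' (mem_Ioi.2 hli) (mem_Ioi.2 hc) hcase
      rw [hrw]; exact h1.trans h2
    · have ha2 : a s⁻¹ ≤ a (lam i) := hmono (mem_Ioi.2 hc) (mem_Ioi.2 hli) hcase.le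
      have hnum : lam i * Real.exp (-(lam i * s)) ≤ s⁻¹ := by
        have h3 : lam i * s ≤ Real.exp (lam i * s) := by
          have := Real.add_one_le_exp (lam i * s); linarith
        have hE : (0:ℝ) < Real.exp (lam i * s) := Real.exp_pos _
        have h5 : lam i * s * (Real.exp (lam i * s))⁻¹ ≤ 1 := by
          have := mul_le_mul_of_nonneg_right h3 (inv_nonneg.2 hE.le)
          rwa [mul_inv_cancel₀ hE.ne'] at this
        rw [← one_div, le_div_iff₀ hs0, Real.exp_neg]
        calc lam i * (Real.exp (lam i * s))⁻¹ * s
            = lam i * s * (Real.exp (lam i * s))⁻¹ := by ring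
          _ ≤ 1 := h5
      rw [hrw]
      exact div_le_div₀ hc.le hnum hac ha2
  -- bound the integral
  have step1 : ∫⁻ s in Ioc (0:ℝ) 1,
      ⨆ i, ENNReal.ofReal (lam i * Real.exp (-(lam i * s)) / a (lam i))
      ≤ ∫⁻ s in Ioc (0:ℝ) 1, ENNReal.ofReal ((s * a s⁻¹)⁻¹) := by
    apply setLIntegral_mono' measurableSet_Ioc
    intro s hs
    exact iSup_le fun i => ENNReal.ofReal_le_ofReal (key s hs i)
  -- change of variables u ↦ u⁻¹ maps Ici 1 onto Ioc 0 1
  have himg : (fun u : ℝ => u⁻¹) '' Ici 1 = Ioc (0:ℝ) 1 := by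
    ext x
    constructor
    · rintro ⟨u, hu, rfl⟩
      have hu0 : (0:ℝ) < u := lt_of_lt_of_le one_pos hu
      exact ⟨inv_pos.2 hu0, inv_le_one_of_one_le₀ hu⟩
    · rintro ⟨hx0, hx1⟩
      exact ⟨x⁻¹, (one_le_inv₀ hx0).2 hx1, inv_inv x⟩
  have hderiv : ∀ u ∈ Ici (1:ℝ),
      HasDerivWithinAt (fun u : ℝ => u⁻¹) (-(u^2)⁻¹) (Ici 1) u := by
    intro u hu
    have hu0 : u ≠ 0 := by
      have : (0:ℝ) < u := lt_of_lt_of_le one_pos hu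
      exact this.ne'
    exact (hasDerivAt_inv hu0).hasDerivWithinAt
  have hinj : InjOn (fun u : ℝ => u⁻¹) (Ici 1) := inv_injective.injOn
  have hsub := lintegral_image_eq_lintegral_abs_det_fderiv_mul volume measurableSet_Ici
      (fun x hx => (hderiv x hx).hasFDerivWithinAt) hinj
      (fun s => ENNReal.ofReal ((s * a s⁻¹)⁻¹))
  simp only [ContinuousLinearMap.det_toSpanSingleton] at hsub
  rw [himg] at hsub
  have hcongr : ∫⁻ u in Ici (1:ℝ),
      ENNReal.ofReal |(-(u^2)⁻¹)| * ENNReal.ofReal ((u⁻¹ * a u⁻¹⁻¹)⁻¹)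
      = ∫⁻ u in Ici (1:ℝ), ENNReal.ofReal (1 / (u * a u)) := by
    apply setLIntegral_congr_fun measurableSet_Ici
    intro u hu
    have hu0 : (0:ℝ) < u := lt_of_lt_of_le one_pos hu
    have hau : (0:ℝ) < a u := hpos _ hu0
    beta_reduce
    rw [inv_inv, abs_of_nonpos (neg_nonpos.2 (by positivity : (0:ℝ) ≤ (u^2)⁻¹)), neg_neg,
      ← ENNReal.ofReal_mul (by positivity)]
    congr 1
    field_simp
  calc ∫⁻ s in Ioc (0:ℝ) 1,
        ⨆ i, ENNReal.ofReal (lam i * Real.exp (-(lam i * s)) / a (lam i))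
      ≤ ∫⁻ s in Ioc (0:ℝ) 1, ENNReal.ofReal ((s * a s⁻¹)⁻¹) := step1
    _ = ∫⁻ u in Ici (1:ℝ), ENNReal.ofReal |(-(u^2)⁻¹)| *
          ENNReal.ofReal ((u⁻¹ * a u⁻¹⁻¹)⁻¹) := hsub
    _ = ∫⁻ u in Ici (1:ℝ), ENNReal.ofReal (1 / (u * a u)) := hcongr
    _ < ⊤ := hint
end

section
/- Let a : (0,∞) → (0,∞) and (λᵢ)_{i≥1} with 0 < λ₁ ≤ λ₂ ≤ ⋯ and λᵢ → ∞. If ∫₀¹ sup_{i≥1} λᵢ e^{-λᵢ s}/a(λᵢ) ds < ∞, then lim_{i→∞} a(λᵢ) = ∞. -/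
open Set Real MeasureTheory Filter
open scoped ENNReal

/-- The lintegral of `s ↦ μ e^{-μ s} / b` over `Ioc l u`. -/
lemma aux_interval_lintegral (μ b l u : ℝ) (hμ : 0 ≤ μ) (hb : 0 < b) (hlu : l ≤ u) :
    ∫⁻ s in Ioc l u, ENNReal.ofReal (μ * Real.exp (-(μ * s)) / b)
      = ENNReal.ofReal ((Real.exp (-(μ * l)) - Real.exp (-(μ * u))) / b) := by
  have hcont : Continuous fun s : ℝ => μ * Real.exp (-(μ * s)) / b :=
    ((continuous_const.mul ((continuous_const.mul continuous_id).neg.rexp))).div_const b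
  have hderiv : ∀ x ∈ uIcc l u,
      HasDerivAt (fun s : ℝ => -Real.exp (-(μ * s)) / b)
        (μ * Real.exp (-(μ * x)) / b) x := by
    intro x _
    have h1 : HasDerivAt (fun s : ℝ => -(μ * s)) (-μ) x := by
      simpa [neg_mul] using (hasDerivAt_id x).const_mul (-μ)
    have h2 : HasDerivAt (fun s : ℝ => Real.exp (-(μ * s)))
        (Real.exp (-(μ * x)) * (-μ)) x := h1.exp
    have h3 : HasDerivAt (fun s : ℝ => -Real.exp (-(μ * s)) / b)
        (-(Real.exp (-(μ * x)) * (-μ)) / b) x := (h2.neg).div_const b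
    convert h3 using 1
    ring
  have hii : IntervalIntegrable (fun s : ℝ => μ * Real.exp (-(μ * s)) / b) volume l u :=
    hcont.intervalIntegrable l u
  have hFTC := intervalIntegral.integral_eq_sub_of_hasDerivAt hderiv hii
  have hval : ∫ s in Ioc l u, μ * Real.exp (-(μ * s)) / b
      = (Real.exp (-(μ * l)) - Real.exp (-(μ * u))) / b := by
    rw [← intervalIntegral.integral_of_le hlu, hFTC]
    ring
  rw [← hval]
  rw [← ofReal_integral_eq_lintegral_ofReal]
  · exact hcont.integrableOn_Ioc
  · refine Filter.Eventually.of_forall fun s => ?_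
    positivity

theorem stmt_6 (a : ℝ → ℝ) (lam : ℕ → ℝ)
    (hpos : ∀ x > 0, 0 < a x)
    (hlam0 : 0 < lam 0) (hlammono : Monotone lam)
    (hlamtop : Tendsto lam atTop atTop)
    (hint : ∫⁻ s in Ioc (0:ℝ) 1,
      ⨆ i, ENNReal.ofReal (lam i * Real.exp (-(lam i * s)) / a (lam i)) < ⊤) :
    Tendsto (fun i => a (lam i)) atTop atTop := by
  set g : ℝ → ℝ≥0∞ := fun s =>
    ⨆ i, ENNReal.ofReal (lam i * Real.exp (-(lam i * s)) / a (lam i)) with hg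
  by_contra hcon
  rw [tendsto_atTop] at hcon
  push_neg at hcon
  obtain ⟨b, hb⟩ := hcon
  replace hb : ∃ᶠ i in atTop, ¬ b ≤ a (lam i) := hb.mono fun _ h => not_le.2 h
  -- hb : ∃ᶠ i, ¬ b ≤ a (lam i)
  have hlampos : ∀ i, 0 < lam i := fun i => lt_of_lt_of_le hlam0 (hlammono (Nat.zero_le i))
  have hapos : ∀ i, 0 < a (lam i) := fun i => hpos _ (hlampos i)
  have hbpos : 0 < b := by
    obtain ⟨i, hi⟩ := hb.exists
    exact lt_of_lt_of_le (hapos i) (le_of_not_ge hi)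
  -- extraction: for any threshold c, find j with a (lam j) < b and c ≤ lam j
  have H : ∀ c : ℝ, ∃ j, a (lam j) < b ∧ c ≤ lam j := by
    intro c
    obtain ⟨j, hj1, hj2⟩ := (hb.and_eventually (hlamtop.eventually_ge_atTop c)).exists
    exact ⟨j, lt_of_not_ge hj1, hj2⟩
  -- build a subsequence of values μ with ratio ≥ 2
  let φ : ℕ → ℕ := fun n => Nat.rec (H 1).choose (fun _ p => (H (2 * lam p)).choose) n
  set μ : ℕ → ℝ := fun n => lam (φ n) with hμdef
  have hμ0 : (1 : ℝ) ≤ μ 0 := (H 1).choose_spec.2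
  have hμa : ∀ n, a (μ n) < b := by
    intro n
    cases n with
    | zero => exact (H 1).choose_spec.1
    | succ k => exact (H (2 * lam (φ k))).choose_spec.1
  have hμ2 : ∀ n, 2 * μ n ≤ μ (n + 1) := fun n => (H (2 * lam (φ n))).choose_spec.2
  have hμ1 : ∀ n, (1 : ℝ) ≤ μ n := by
    intro n
    induction n with
    | zero => exact hμ0
    | succ k ih => nlinarith [hμ2 k]
  have hμpos : ∀ n, (0 : ℝ) < μ n := fun n => lt_of_lt_of_le one_pos (hμ1 n)
  -- constant lower bound for each interval
  set c : ℝ≥0∞ := ENNReal.ofReal ((Real.exp (-(1/2 : ℝ)) - Real.exp (-1)) / b) with hc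
  have hcpos : 0 < c := by
    rw [hc]
    apply ENNReal.ofReal_pos.2
    apply div_pos _ hbpos
    have : (-(1:ℝ)) < -(1/2 : ℝ) := by norm_num
    linarith [Real.exp_lt_exp.2 this]
  -- pointwise bound for g on each interval
  have hpt : ∀ n, ∀ s : ℝ,
      ENNReal.ofReal (μ n * Real.exp (-(μ n * s)) / b) ≤ g s := by
    intro n s
    refine le_trans ?_ (le_iSup _ (φ n))
    apply ENNReal.ofReal_le_ofReal
    apply div_le_div_of_nonneg_left _ (hpos _ (hμpos n)) (le_of_lt (hμa n))
    exact mul_nonneg (hμpos n).le (Real.exp_nonneg _)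
  -- lintegral over each interval is at least c
  have hintv : ∀ n, c ≤ ∫⁻ s in Ioc (1 / μ (n+1)) (1 / μ n), g s := by
    intro n
    have hle : 1 / μ (n+1) ≤ 1 / μ n :=
      one_div_le_one_div_of_le (hμpos n) (by nlinarith [hμ2 n, hμpos n])
    calc c ≤ ENNReal.ofReal ((Real.exp (-(μ n * (1 / μ (n+1))))
              - Real.exp (-(μ n * (1 / μ n)))) / b) := by
            apply ENNReal.ofReal_le_ofReal
            have hne : μ n ≠ 0 := (hμpos n).ne'
            have h1 : μ n * (1 / μ n) = 1 := by field_simp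
            have h2 : μ n * (1 / μ (n+1)) ≤ 1/2 := by
              rw [mul_one_div, div_le_div_iff₀ (hμpos (n+1)) (by norm_num : (0:ℝ) < 2)]
              nlinarith [hμ2 n]
            have h3 : Real.exp (-(1/2 : ℝ)) ≤ Real.exp (-(μ n * (1 / μ (n+1)))) :=
              Real.exp_le_exp.2 (by linarith)
            rw [h1]
            exact div_le_div_of_nonneg_right (by linarith) hbpos.le
      _ = ∫⁻ s in Ioc (1 / μ (n+1)) (1 / μ n),
            ENNReal.ofReal (μ n * Real.exp (-(μ n * s)) / b) :=
          (aux_interval_lintegral (μ n) b _ _ (hμpos n).le hbpos hle).symm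
      _ ≤ ∫⁻ s in Ioc (1 / μ (n+1)) (1 / μ n), g s :=
          lintegral_mono fun s => hpt n s
  -- accumulate: N * c ≤ lintegral over Ioc (1/μ N) (1/μ 0)
  have hmono : Monotone μ :=
    monotone_nat_of_le_succ fun n => by nlinarith [hμ2 n, hμpos n]
  have hacc : ∀ N : ℕ, (N : ℝ≥0∞) * c ≤ ∫⁻ s in Ioc (1 / μ N) (1 / μ 0), g s := by
    intro N
    induction N with
    | zero => simp
    | succ k ih =>
        have h1 : 1 / μ (k+1) ≤ 1 / μ k :=
          one_div_le_one_div_of_le (hμpos k) (by nlinarith [hμ2 k, hμpos k])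
        have h2 : 1 / μ k ≤ 1 / μ 0 :=
          one_div_le_one_div_of_le (hμpos 0) (hmono (Nat.zero_le k))
        have hsplit : Ioc (1 / μ (k+1)) (1 / μ k) ∪ Ioc (1 / μ k) (1 / μ 0)
            = Ioc (1 / μ (k+1)) (1 / μ 0) := Ioc_union_Ioc_eq_Ioc h1 h2
        have hdisj : Disjoint (Ioc (1 / μ (k+1)) (1 / μ k)) (Ioc (1 / μ k) (1 / μ 0)) :=
          Ioc_disjoint_Ioc_of_le le_rfl
        rw [← hsplit, lintegral_union measurableSet_Ioc hdisj]
        push_cast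
        rw [add_mul, one_mul, add_comm]
        exact add_le_add (hintv k) ih
  -- the whole integral is bounded below by N * c for all N
  have hIoc01 : ∀ N : ℕ, Ioc (1 / μ N) (1 / μ 0) ⊆ Ioc (0:ℝ) 1 := by
    intro N
    apply Ioc_subset_Ioc
    · exact (one_div_pos.2 (hμpos N)).le
    · rw [div_le_one (hμpos 0)]; exact hμ0
  have hall : ∀ N : ℕ, (N : ℝ≥0∞) * c ≤ ∫⁻ s in Ioc (0:ℝ) 1, g s := fun N =>
    le_trans (hacc N) (lintegral_mono_set (hIoc01 N))
  -- contradiction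
  have hne : (∫⁻ s in Ioc (0:ℝ) 1, g s) ≠ ⊤ := hint.ne
  have hdivlt : (∫⁻ s in Ioc (0:ℝ) 1, g s) / c < ⊤ :=
    ENNReal.div_lt_top hne hcpos.ne'
  obtain ⟨N, hN⟩ := ENNReal.exists_nat_gt hdivlt.ne
  have : (N : ℝ≥0∞) ≤ (∫⁻ s in Ioc (0:ℝ) 1, g s) / c :=
    (ENNReal.le_div_iff_mul_le (Or.inl hcpos.ne') (Or.inl ENNReal.ofReal_ne_top)).2 (hall N)
  exact absurd this (not_le.2 hN)
end
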